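/- Along any solution (X, P) of the extremal system with continuous control u, the switching function Φ is twice differentiable and satisfies Φ̈(t) = −Δ² Φ(t) + Δ u(t) (x1(t) p2(t) − x2(t) p1(t)) − Δ x1(t) x3(t) for every t. -/

import Mathlib

open Set

/-- Along any solution (X, P) of the extremal system with continuous
control u, the switching function Φ = p3 x2 − p2 x3 is twice differentiable with
Φ̇ = Δ (x1 p3 − x3 p1) and
Φ̈(t) = −Δ² Φ(t) + Δ u(t) (x1 p2 − x2 p1)(t) − Δ x1(t) x3(t). -/
theorem switching_function_second_deriv
    (Δ : ℝ) (hΔ : Δ ≠ 0) (a b : ℝ) (hab : a < b)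
    (u x1 x2 x3 p1 p2 p3 : ℝ → ℝ)
    (hu : ContinuousOn u (Ioo a b))
    (hx1 : ∀ t ∈ Ioo a b, HasDerivAt x1 (-Δ * x2 t) t)
    (hx2 : ∀ t ∈ Ioo a b, HasDerivAt x2 (Δ * x1 t - u t * x3 t) t)
    (hx3 : ∀ t ∈ Ioo a b, HasDerivAt x3 (u t * x2 t) t)
    (hp1 : ∀ t ∈ Ioo a b, HasDerivAt p1 (-Δ * p2 t + x1 t) t)
    (hp2 : ∀ t ∈ Ioo a b, HasDerivAt p2 (Δ * p1 t - u t * p3 t) t)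
    (hp3 : ∀ t ∈ Ioo a b, HasDerivAt p3 (u t * p2 t) t) :
    (∀ t ∈ Ioo a b,
      HasDerivAt (fun s => p3 s * x2 s - p2 s * x3 s)
        (Δ * (x1 t * p3 t - x3 t * p1 t)) t) ∧
    (∀ t ∈ Ioo a b,
      HasDerivAt (fun s => Δ * (x1 s * p3 s - x3 s * p1 s))
        (-Δ ^ 2 * (p3 t * x2 t - p2 t * x3 t)
          + Δ * u t * (x1 t * p2 t - x2 t * p1 t) - Δ * x1 t * x3 t) t) := by
  constructor
  · intro t ht
    have h := (((hp3 t ht).mul (hx2 t ht)).sub ((hp2 t ht).mul (hx3 t ht)))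
    refine h.congr_deriv ?_
    ring
  · intro t ht
    have h := ((((hx1 t ht).mul (hp3 t ht)).sub ((hx3 t ht).mul (hp1 t ht))).const_mul Δ)
    refine h.congr_deriv ?_
    ring
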